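/- For every horizon k ∈ ℕ and every node x ∈ Fin n, the strong recurrence probability of Q satisfies 𝔙_Q(k,x) := sInf { hit F k x : F a policy } = ℓ_Q k x, and the infimum is attained: there exists a policy F* with hit F* k x = ℓ_Q k x. (Proposition 2 together with Remark 4: the minimal probability that a stochastic directed path starting at x visits Q within k steps equals the corresponding optimal state-value function, computed by the backward recursion ℓ_Q.) -/
import Mathlib


/-- The backward recursion `ℓ_Q` for the strong recurrence probabilities. -/
noncomputable def ellQ (n h : ℕ) (H : Fin n → Fin h → Finset (Fin n))
    (hne : ∀ i w, (H i w).Nonempty) (μ : Fin h → ℝ) (Q : Finset (Fin n)) :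
    ℕ → Fin n → ℝ
  | 0, _ => 0
  | k + 1, x => ∑ w, μ w * (H x w).inf' (hne x w)
      (fun y => if y ∈ Q then 1 else ellQ n h H hne μ Q k y)

/-- `hitQ n h μ Q k F x`: probability that the chain driven by the policy `F`
(a sequence of selections of `H`) started at `x` visits `Q` within `k` steps. -/
noncomputable def hitQ (n h : ℕ) (μ : Fin h → ℝ) (Q : Finset (Fin n)) :
    ℕ → (ℕ → Fin n → Fin h → Fin n) → Fin n → ℝ
  | 0, _, _ => 0
  | k + 1, F, x => ∑ w, μ w *
      (if (F 0) x w ∈ Q then 1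
       else hitQ n h μ Q k (fun t => F (t + 1)) ((F 0) x w))

/-- **Proposition 2 + Remark 4** (strong recurrence): the minimal probability
that a stochastic directed path starting at `x` visits `Q` within `k` steps
equals the optimal state-value function `ℓ_Q k x`, and the infimum is
attained by some policy. -/
theorem strong_recurrence_eq_optimal_value
    (n h : ℕ) (hn : 1 ≤ n) (hh : 1 ≤ h)
    (H : Fin n → Fin h → Finset (Fin n))
    (hne : ∀ i w, (H i w).Nonempty)
    (μ : Fin h → ℝ) (hμ0 : ∀ w, 0 ≤ μ w) (hμ1 : ∑ w, μ w = 1)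
    (Q : Finset (Fin n)) (k : ℕ) (x : Fin n) :
    sInf {r : ℝ | ∃ F : ℕ → Fin n → Fin h → Fin n,
        (∀ t i w, F t i w ∈ H i w) ∧ r = hitQ n h μ Q k F x}
      = ellQ n h H hne μ Q k x ∧
    ∃ F : ℕ → Fin n → Fin h → Fin n, (∀ t i w, F t i w ∈ H i w) ∧
      hitQ n h μ Q k F x = ellQ n h H hne μ Q k x := by
  classical
  have lb : ∀ (k : ℕ) (F : ℕ → Fin n → Fin h → Fin n),
      (∀ t i w, F t i w ∈ H i w) → ∀ x,
      ellQ n h H hne μ Q k x ≤ hitQ n h μ Q k F x := by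
    intro k
    induction k with
    | zero => intro F hF x; simp [ellQ, hitQ]
    | succ k ih =>
      intro F hF x
      simp only [ellQ, hitQ]
      apply Finset.sum_le_sum
      intro w _
      apply mul_le_mul_of_nonneg_left _ (hμ0 w)
      calc (H x w).inf' (hne x w) (fun y => if y ∈ Q then 1 else ellQ n h H hne μ Q k y)
          ≤ (if F 0 x w ∈ Q then 1 else ellQ n h H hne μ Q k (F 0 x w)) :=
            Finset.inf'_le _ (hF 0 x w)
        _ ≤ _ := by
            by_cases hq : F 0 x w ∈ Q
            · simp [hq]
            · simp only [hq, if_false]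
              exact ih (fun t => F (t + 1)) (fun t i w => hF (t + 1) i w) _
  choose g hg1 hg2 using fun (m : ℕ) (i : Fin n) (w : Fin h) =>
    Finset.exists_mem_eq_inf' (hne i w)
      (fun y => if y ∈ Q then 1 else ellQ n h H hne μ Q m y)
  have opt : ∀ (k : ℕ) (x : Fin n),
      hitQ n h μ Q k (fun t => g (k - 1 - t)) x = ellQ n h H hne μ Q k x := by
    intro k
    induction k with
    | zero => intro x; simp [ellQ, hitQ]
    | succ k ih =>
      intro x
      simp only [hitQ, ellQ, Nat.add_sub_cancel, Nat.sub_zero]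
      have hfun : (fun t => g (k - (t + 1))) = fun t => g (k - 1 - t) := by
        funext t
        have : k - (t + 1) = k - 1 - t := by omega
        rw [this]
      simp only [hfun]
      refine Finset.sum_congr rfl fun w _ => ?_
      congr 1
      rw [ih]
      exact (hg2 k x w).symm
  have hmem : ellQ n h H hne μ Q k x ∈ {r : ℝ | ∃ F : ℕ → Fin n → Fin h → Fin n,
      (∀ t i w, F t i w ∈ H i w) ∧ r = hitQ n h μ Q k F x} :=
    ⟨fun t => g (k - 1 - t), fun t i w => hg1 _ i w, (opt k x).symm⟩
  refine ⟨le_antisymm (csInf_le ⟨ellQ n h H hne μ Q k x, ?_⟩ hmem)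
      (le_csInf ⟨_, hmem⟩ ?_), fun t => g (k - 1 - t),
      fun t i w => hg1 _ i w, opt k x⟩
  · rintro r ⟨F, hF, rfl⟩
    exact lb k F hF x
  · rintro r ⟨F, hF, rfl⟩
    exact lb k F hF x
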